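/- For every n ∈ ℕ with n ≥ 1, every real x > 0, and every h ∈ ℂ with Re(h) > 1, the series below converge absolutely and the generalized (h,q)-Bernoulli polynomial attached to χ satisfies β_{n,χ,q}^h(x) = (h−1)(1−q) · Σ_{m=0}^{∞} q^{(h−1)m}·χ(m)·[x+m]_q^{n} − n · Σ_{m=0}^{∞} q^{hm+x}·χ(m)·[x+m]_q^{n−1}. -/

import Mathlib

open Complex Finset Filter

/-- Complex power `q^z := exp(z·log q)` for a real base `q`. -/
noncomputable def qcpow (q : ℝ) (z : ℂ) : ℂ := Complex.exp (z * (Real.log q : ℂ))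

/-- The complex `q`-number `[z]_q = (1 - q^z)/(1 - q)`. -/
noncomputable def qnum (q : ℝ) (z : ℂ) : ℂ := (1 - qcpow q z) / (1 - (q : ℂ))

/-- The real `q`-number `[y]_q = (1 - q^y)/(1 - q)` for real `y`. -/
noncomputable def qnumR (q : ℝ) (y : ℝ) : ℝ := (1 - Real.exp (y * Real.log q)) / (1 - q)

/-- The `(h,q)`-Bernoulli polynomial
`β_{n,q}^h(x) = (1-q)^{-n} ∑_{l=0}^{n} C(n,l) (-1)^l q^{lx} (l+h-1)/[l+h-1]_q`. -/
noncomputable def qbeta (q : ℝ) (h : ℂ) (n : ℕ) (x : ℝ) : ℂ :=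
  (1 - (q : ℂ))⁻¹ ^ n * ∑ l ∈ Finset.range (n + 1),
    (n.choose l : ℂ) * (-1) ^ l * qcpow q ((l : ℂ) * (x : ℂ)) *
      (((l : ℂ) + h - 1) / qnum q ((l : ℂ) + h - 1))

/-- The generalized `(h,q)`-Bernoulli polynomial attached to a Dirichlet character `χ` mod `f`:
`β_{n,χ,q}^h(x) = [f]_q^{n-1} ∑_{a=0}^{f-1} χ(a) q^{(h-1)a} β_{n,q^f}^h((x+a)/f)`. -/
noncomputable def qbetaChi (q : ℝ) (h : ℂ) (f : ℕ) (χ : DirichletCharacter ℂ f)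
    (n : ℕ) (x : ℝ) : ℂ :=
  qnum q (f : ℂ) ^ ((n : ℤ) - 1) * ∑ a ∈ Finset.range f,
    χ (a : ZMod f) * qcpow q ((h - 1) * (a : ℂ)) * qbeta (q ^ f) h n ((x + a) / f)

lemma qcpow_add (q : ℝ) (z w : ℂ) : qcpow q (z + w) = qcpow q z * qcpow q w := by
  simp [qcpow, add_mul, Complex.exp_add]

lemma qcpow_nat_mul (q : ℝ) (y : ℂ) (m : ℕ) : qcpow q ((m : ℂ) * y) = qcpow q y ^ m := by
  simp [qcpow, mul_assoc, Complex.exp_nat_mul]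

lemma norm_qcpow (q : ℝ) (z : ℂ) : ‖qcpow q z‖ = Real.exp (z.re * Real.log q) := by
  rw [qcpow, Complex.norm_exp]
  congr 1
  simp [Complex.mul_re]

lemma qcpow_ofReal (q : ℝ) (y : ℝ) : qcpow q (y : ℂ) = ((Real.exp (y * Real.log q) : ℝ) : ℂ) := by
  rw [qcpow, ← Complex.ofReal_mul, Complex.ofReal_exp]

lemma norm_qcpow_lt_one {q : ℝ} (hq0 : 0 < q) (hq1 : q < 1) {z : ℂ} (hz : 0 < z.re) :
    ‖qcpow q z‖ < 1 := by
  rw [norm_qcpow]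
  exact Real.exp_lt_one_iff.mpr (mul_neg_of_pos_of_neg hz (Real.log_neg hq0 hq1))

lemma summable_qcpow_mul {q : ℝ} (hq0 : 0 < q) (hq1 : q < 1) (c : ℂ) (hc : 0 < c.re)
    (g : ℕ → ℂ) (C : ℝ) (hg : ∀ m, ‖g m‖ ≤ C) :
    Summable (fun m : ℕ => qcpow q (c * (m : ℂ)) * g m) := by
  have hr0 : (0:ℝ) ≤ Real.exp (c.re * Real.log q) := (Real.exp_pos _).le
  have hr1 : Real.exp (c.re * Real.log q) < 1 :=
    Real.exp_lt_one_iff.mpr (mul_neg_of_pos_of_neg hc (Real.log_neg hq0 hq1))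
  apply Summable.of_norm_bounded (g := fun m => Real.exp (c.re * Real.log q) ^ m * C)
  · exact (summable_geometric_of_lt_one hr0 hr1).mul_right C
  · intro m
    rw [norm_mul]
    have : ‖qcpow q (c * (m : ℂ))‖ = Real.exp (c.re * Real.log q) ^ m := by
      rw [mul_comm c ((m : ℕ) : ℂ), qcpow_nat_mul, norm_pow, norm_qcpow]
    rw [this]
    exact mul_le_mul_of_nonneg_left (hg m) (pow_nonneg hr0 m)

lemma qnumR_pos {q : ℝ} (hq0 : 0 < q) (hq1 : q < 1) {y : ℝ} (hy : 0 < y) :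
    0 < qnumR q y := by
  have h1 : Real.exp (y * Real.log q) < 1 :=
    Real.exp_lt_one_iff.mpr (mul_neg_of_pos_of_neg hy (Real.log_neg hq0 hq1))
  exact div_pos (by linarith) (by linarith)

lemma qnumR_le {q : ℝ} (hq0 : 0 < q) (hq1 : q < 1) (y : ℝ) :
    qnumR q y ≤ (1 - q)⁻¹ := by
  have h0 : 0 < Real.exp (y * Real.log q) := Real.exp_pos _
  rw [qnumR, div_le_iff₀ (by linarith), inv_mul_cancel₀ (by linarith : (1:ℝ) - q ≠ 0)]
  linarith

lemma binom1 (n : ℕ) (t : ℂ) :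
    ∑ l ∈ Finset.range (n + 1), (n.choose l : ℂ) * (-1) ^ l * t ^ l = (1 - t) ^ n := by
  rw [show (1 : ℂ) - t = -t + 1 by ring, add_pow]
  refine Finset.sum_congr rfl fun l _ => ?_
  rw [one_pow, neg_pow]
  ring

lemma binom2 (k : ℕ) (t : ℂ) :
    ∑ l ∈ Finset.range (k + 2), ((k + 1).choose l : ℂ) * (-1) ^ l * (l : ℂ) * t ^ l
      = -((k : ℂ) + 1) * t * (1 - t) ^ k := by
  rw [Finset.sum_range_succ']
  have key : ∀ i : ℕ, (((k + 1).choose (i + 1) : ℂ)) * ((i : ℂ) + 1) = ((k : ℂ) + 1) * (k.choose i : ℂ) := by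
    intro i
    have := Nat.add_one_mul_choose_eq k i
    exact_mod_cast congrArg (fun j : ℕ => (j : ℂ)) this.symm
  have step : ∀ i ∈ Finset.range (k + 1),
      ((k + 1).choose (i + 1) : ℂ) * (-1) ^ (i + 1) * ((i + 1 : ℕ) : ℂ) * t ^ (i + 1)
        = (-((k : ℂ) + 1) * t) * ((k.choose i : ℂ) * (-1) ^ i * t ^ i) := by
    intro i _
    have h1 : ((i + 1 : ℕ) : ℂ) = (i : ℂ) + 1 := by push_cast; ring
    rw [h1, show ((k + 1).choose (i + 1) : ℂ) * (-1) ^ (i + 1) * ((i : ℂ) + 1) * t ^ (i + 1)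
      = (((k + 1).choose (i + 1) : ℂ) * ((i : ℂ) + 1)) * ((-1) ^ (i + 1) * t ^ (i + 1)) by ring,
      key i, pow_succ, pow_succ]
    ring
  rw [Finset.sum_congr rfl step, ← Finset.mul_sum, binom1]
  simp

lemma tsum_qcpow_geometric {q : ℝ} (hq0 : 0 < q) (hq1 : q < 1) {w : ℂ} (hw : 0 < w.re) :
    ∑' m : ℕ, qcpow q (w * (m : ℂ)) = (1 - qcpow q w)⁻¹ := by
  have : ∀ m : ℕ, qcpow q (w * (m : ℂ)) = qcpow q w ^ m := fun m => by
    rw [mul_comm, qcpow_nat_mul]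
  rw [tsum_congr this]
  exact tsum_geometric_of_norm_lt_one (norm_qcpow_lt_one hq0 hq1 hw)

lemma div_qnum_eq {q : ℝ} (hq0 : 0 < q) (hq1 : q < 1) {w : ℂ} (hw : 0 < w.re) :
    w / qnum q w = w * (1 - (q : ℂ)) * ∑' m : ℕ, qcpow q (w * (m : ℂ)) := by
  have hne : (1 : ℂ) - qcpow q w ≠ 0 := by
    intro hcon
    have h1 : qcpow q w = 1 := by linear_combination -hcon
    have h2 := norm_qcpow_lt_one hq0 hq1 hw
    rw [h1, norm_one] at h2
    exact lt_irrefl _ h2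
  have hq : (1 : ℂ) - (q : ℝ) ≠ 0 := by
    intro hcon
    have : ((q : ℝ) : ℂ) = 1 := by linear_combination -hcon
    have : q = 1 := by exact_mod_cast this
    linarith
  rw [tsum_qcpow_geometric hq0 hq1 hw, qnum]
  field_simp

lemma summable_qcpow {q : ℝ} (hq0 : 0 < q) (hq1 : q < 1) {w : ℂ} (hw : 0 < w.re) :
    Summable (fun m : ℕ => qcpow q (w * (m : ℂ))) := by
  have := summable_qcpow_mul hq0 hq1 w hw (fun _ => 1) 1 (fun m => by simp)
  simpa using this

lemma qbeta_eq {q : ℝ} (hq0 : 0 < q) (hq1 : q < 1) {h : ℂ} (hh : 1 < h.re)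
    (k : ℕ) {x : ℝ} (hx : 0 < x) :
    qbeta q h (k + 1) x = ∑' m : ℕ,
      ((h - 1) * (1 - (q : ℂ)) * qcpow q ((h - 1) * (m : ℂ)) * ((qnumR q (x + m) : ℝ) : ℂ) ^ (k + 1)
        - ((k : ℂ) + 1) * qcpow q (h * (m : ℂ) + (x : ℂ)) * ((qnumR q (x + m) : ℝ) : ℂ) ^ k) := by
  have hq : (1 : ℂ) - (q : ℝ) ≠ 0 := by
    intro hcon
    have : ((q : ℝ) : ℂ) = 1 := by linear_combination -hcon
    have : q = 1 := by exact_mod_cast this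
    linarith
  have hwre : ∀ l : ℕ, 0 < ((l : ℂ) + h - 1).re := by
    intro l
    simp only [Complex.sub_re, Complex.add_re, Complex.natCast_re, Complex.one_re]
    have : (0:ℝ) ≤ l := Nat.cast_nonneg l
    linarith
  -- step 1: each term as a tsum
  have step1 : ∀ l ∈ Finset.range (k + 1 + 1),
      ((k+1).choose l : ℂ) * (-1) ^ l * qcpow q ((l : ℂ) * (x : ℂ)) *
        (((l : ℂ) + h - 1) / qnum q ((l : ℂ) + h - 1))
      = ∑' m : ℕ, (((k+1).choose l : ℂ) * (-1) ^ l * qcpow q ((l : ℂ) * (x : ℂ)) *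
          (((l : ℂ) + h - 1) * (1 - (q : ℂ)))) * qcpow q (((l : ℂ) + h - 1) * (m : ℂ)) := by
    intro l _
    calc ((k+1).choose l : ℂ) * (-1) ^ l * qcpow q ((l : ℂ) * (x : ℂ)) *
        (((l : ℂ) + h - 1) / qnum q ((l : ℂ) + h - 1))
        = (((k+1).choose l : ℂ) * (-1) ^ l * qcpow q ((l : ℂ) * (x : ℂ)) *
            (((l : ℂ) + h - 1) * (1 - (q : ℂ)))) * ∑' m : ℕ, qcpow q (((l : ℂ) + h - 1) * (m : ℂ)) := by
          rw [div_qnum_eq hq0 hq1 (hwre l)]; ring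
      _ = _ := tsum_mul_left.symm
  rw [qbeta, Finset.sum_congr rfl step1, ← Summable.tsum_finsetSum (fun l _ =>
    (summable_qcpow hq0 hq1 (hwre l)).mul_left _), ← tsum_mul_left]
  refine tsum_congr fun m => ?_
  -- per-m computation
  set t : ℂ := qcpow q ((x : ℂ) + (m : ℂ)) with ht
  set E : ℂ := qcpow q ((h - 1) * (m : ℂ)) with hE
  have htl : ∀ l : ℕ, qcpow q ((l : ℂ) * (x : ℂ)) * qcpow q (((l : ℂ) + h - 1) * (m : ℂ))
      = t ^ l * E := by
    intro l
    rw [ht, hE, ← qcpow_nat_mul, ← qcpow_add, ← qcpow_add]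
    congr 1
    ring
  have expand : ∀ l ∈ Finset.range (k + 1 + 1),
      (((k+1).choose l : ℂ) * (-1) ^ l * qcpow q ((l : ℂ) * (x : ℂ)) *
          (((l : ℂ) + h - 1) * (1 - (q : ℂ)))) * qcpow q (((l : ℂ) + h - 1) * (m : ℂ))
      = ((1 - (q : ℂ)) * E * (h - 1)) * (((k+1).choose l : ℂ) * (-1) ^ l * t ^ l)
        + ((1 - (q : ℂ)) * E) * (((k+1).choose l : ℂ) * (-1) ^ l * (l : ℂ) * t ^ l) := by
    intro l _
    have := htl l
    calc (((k+1).choose l : ℂ) * (-1) ^ l * qcpow q ((l : ℂ) * (x : ℂ)) *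
          (((l : ℂ) + h - 1) * (1 - (q : ℂ)))) * qcpow q (((l : ℂ) + h - 1) * (m : ℂ))
        = (((k+1).choose l : ℂ) * (-1) ^ l * (((l : ℂ) + h - 1) * (1 - (q : ℂ)))) *
            (qcpow q ((l : ℂ) * (x : ℂ)) * qcpow q (((l : ℂ) + h - 1) * (m : ℂ))) := by ring
      _ = (((k+1).choose l : ℂ) * (-1) ^ l * (((l : ℂ) + h - 1) * (1 - (q : ℂ)))) * (t ^ l * E) := by
            rw [this]
      _ = _ := by ring
  rw [Finset.sum_congr rfl expand, Finset.sum_add_distrib, ← Finset.mul_sum, ← Finset.mul_sum,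
    binom1, binom2]
  -- now pure algebra
  have hxm : (x : ℂ) + (m : ℂ) = ((x + (m : ℕ) : ℝ) : ℂ) := by push_cast; ring
  have hR : (1 : ℂ) - t = (1 - (q : ℂ)) * ((qnumR q (x + m) : ℝ) : ℂ) := by
    rw [ht, hxm, qcpow_ofReal, qnumR]
    rw [show ((((1:ℝ) - Real.exp ((x + ↑m) * Real.log q)) / (1 - q) : ℝ) : ℂ)
      = (1 - ((Real.exp ((x + ↑m) * Real.log q) : ℝ) : ℂ)) / (1 - (q:ℂ)) by push_cast; ring]
    field_simp
  have hEt : E * t = qcpow q (h * (m : ℂ) + (x : ℂ)) := by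
    rw [hE, ht, ← qcpow_add]
    congr 1
    ring
  rw [hR, ← hEt, mul_pow, mul_pow]
  rw [inv_pow]
  field_simp
  ring

lemma zmodsum {M : Type*} [AddCommMonoid M] (f : ℕ) [NeZero f] (g : ℕ → M) :
    ∑ j : ZMod f, g j.val = ∑ a ∈ Finset.range f, g a := by
  refine Finset.sum_nbij' (fun j => j.val) (fun a => (a : ZMod f)) ?_ ?_ ?_ ?_ ?_ <;>
    simp_all [ZMod.val_cast_of_lt, ZMod.val_lt, Finset.mem_range, Nat.mod_eq_of_lt]


/-- series representation of `β_{n,χ,q}^h(x)` for `n ≥ 1`, `x > 0`. -/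
theorem qbetaChi_eq_tsum (q : ℝ) (hq0 : 0 < q) (hq1 : q < 1)
    (h : ℂ) (hh : 1 < h.re) (f : ℕ) (hf : 1 ≤ f) (χ : DirichletCharacter ℂ f)
    (n : ℕ) (hn : 1 ≤ n) (x : ℝ) (hx : 0 < x) :
    Summable (fun m : ℕ => qcpow q ((h - 1) * (m : ℂ)) * χ (m : ZMod f) *
      ((qnumR q (x + m) : ℂ) ^ n)) ∧
    Summable (fun m : ℕ => qcpow q (h * (m : ℂ) + (x : ℂ)) * χ (m : ZMod f) *
      ((qnumR q (x + m) : ℂ) ^ (n - 1))) ∧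
    qbetaChi q h f χ n x =
      (h - 1) * (1 - (q : ℂ)) *
        (∑' m : ℕ, qcpow q ((h - 1) * (m : ℂ)) * χ (m : ZMod f) * ((qnumR q (x + m) : ℂ) ^ n)) -
      (n : ℂ) *
        ∑' m : ℕ, qcpow q (h * (m : ℂ) + (x : ℂ)) * χ (m : ZMod f) *
          ((qnumR q (x + m) : ℂ) ^ (n - 1)) := by
  haveI : NeZero f := ⟨by omega⟩
  obtain ⟨k, rfl⟩ : ∃ k, n = k + 1 := ⟨n - 1, (Nat.succ_pred_eq_of_pos hn).symm⟩
  have hlog : Real.log q < 0 := Real.log_neg hq0 hq1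
  have h1q : (0:ℝ) < 1 - q := by linarith
  -- bounds on the "tail" factors
  have hbound : ∀ (j : ℕ) (m : ℕ), ‖(χ (m : ZMod f) : ℂ) * ((qnumR q (x + m) : ℝ) : ℂ) ^ j‖
      ≤ ((1 - q)⁻¹) ^ j := by
    intro j m
    rw [norm_mul, norm_pow, Complex.norm_real, Real.norm_eq_abs,
      abs_of_pos (qnumR_pos hq0 hq1 (by positivity))]
    calc ‖(χ (m : ZMod f) : ℂ)‖ * qnumR q (x + m) ^ j
        ≤ 1 * ((1 - q)⁻¹) ^ j := by
          apply mul_le_mul (χ.norm_le_one _) (pow_le_pow_left₀ (qnumR_pos hq0 hq1 (by positivity)).le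
            (qnumR_le hq0 hq1 _) j) (pow_nonneg (qnumR_pos hq0 hq1 (by positivity)).le _) zero_le_one
      _ = _ := one_mul _
  -- Summability 1
  have S1 : Summable (fun m : ℕ => qcpow q ((h - 1) * (m : ℂ)) * χ (m : ZMod f) *
      ((qnumR q (x + m) : ℂ) ^ (k + 1))) := by
    have := summable_qcpow_mul hq0 hq1 (h - 1) (by simp [Complex.sub_re]; linarith)
      (fun m => χ (m : ZMod f) * ((qnumR q (x + m) : ℝ) : ℂ) ^ (k + 1)) _ (hbound (k + 1))
    exact this.congr fun m => by ring
  -- Summability 2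
  have S2 : Summable (fun m : ℕ => qcpow q (h * (m : ℂ) + (x : ℂ)) * χ (m : ZMod f) *
      ((qnumR q (x + m) : ℂ) ^ k)) := by
    have := summable_qcpow_mul hq0 hq1 h (by linarith)
      (fun m => qcpow q (x : ℂ) * (χ (m : ZMod f) * ((qnumR q (x + m) : ℝ) : ℂ) ^ k))
      (‖qcpow q (x : ℂ)‖ * ((1 - q)⁻¹) ^ k)
      (fun m => by rw [norm_mul]; exact mul_le_mul_of_nonneg_left (hbound k m) (norm_nonneg _))
    refine this.congr fun m => ?_
    rw [qcpow_add]
    ring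
  refine ⟨S1, by simpa using S2, ?_⟩
  simp only [Nat.add_sub_cancel]
  -- the combined summand
  set G : ℕ → ℂ := fun m => (h - 1) * (1 - (q : ℂ)) *
      (qcpow q ((h - 1) * (m : ℂ)) * χ (m : ZMod f) * ((qnumR q (x + m) : ℝ) : ℂ) ^ (k + 1))
    - ((k : ℂ) + 1) *
      (qcpow q (h * (m : ℂ) + (x : ℂ)) * χ (m : ZMod f) * ((qnumR q (x + m) : ℝ) : ℂ) ^ k)
    with hGdef
  have hG : Summable G := (S1.mul_left _).sub (S2.mul_left _)
  have hsplit : ∑' m, G m =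
      (h - 1) * (1 - (q : ℂ)) *
        (∑' m : ℕ, qcpow q ((h - 1) * (m : ℂ)) * χ (m : ZMod f) * ((qnumR q (x + m) : ℝ) : ℂ) ^ (k + 1)) -
      (((k : ℂ)) + 1) *
        ∑' m : ℕ, qcpow q (h * (m : ℂ) + (x : ℂ)) * χ (m : ZMod f) * ((qnumR q (x + m) : ℝ) : ℂ) ^ k := by
    rw [hGdef, Summable.tsum_sub (S1.mul_left _) (S2.mul_left _), tsum_mul_left, tsum_mul_left]
  have hcast : ((k + 1 : ℕ) : ℂ) = (k : ℂ) + 1 := by push_cast; ring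
  rw [hcast, ← hsplit]
  -- now show qbetaChi = ∑' G
  have resid : ∑' m, G m = ∑ a ∈ Finset.range f, ∑' m : ℕ, G (a + f * m) := by
    rw [Nat.sumByResidueClasses hG f]
    exact zmodsum f (fun a => ∑' m : ℕ, G (a + f * m))
  have hf0 : (f : ℝ) ≠ 0 := by positivity
  have hfC : (f : ℂ) ≠ 0 := by exact_mod_cast (by positivity : (f:ℝ) ≠ 0)
  have hqf0 : 0 < q ^ f := pow_pos hq0 f
  have hqf1 : q ^ f < 1 := pow_lt_one₀ hq0.le hq1 (by omega)
  have hqfpow : ∀ z : ℂ, qcpow (q ^ f) z = qcpow q ((f : ℂ) * z) := by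
    intro z
    rw [qcpow, qcpow, Real.log_pow]
    congr 1
    push_cast
    ring
  have hexpf : Real.exp ((f : ℝ) * Real.log q) = q ^ f := by
    rw [Real.exp_nat_mul, Real.exp_log hq0]
  have hKrpos : 0 < qnumR q (f : ℝ) := qnumR_pos hq0 hq1 (by positivity)
  have hKrC : ((qnumR q (f : ℝ) : ℝ) : ℂ) ≠ 0 := by exact_mod_cast hKrpos.ne'
  have hKnum : qnum q (f : ℂ) = ((qnumR q (f : ℝ) : ℝ) : ℂ) := by
    rw [qnum, show ((f : ℕ) : ℂ) = (((f : ℝ) : ℝ) : ℂ) by push_cast; rfl, qcpow_ofReal, qnumR]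
    push_cast
    ring
  have hKrel : (1 : ℂ) - ((q ^ f : ℝ) : ℂ) = ((qnumR q (f : ℝ) : ℝ) : ℂ) * (1 - (q : ℂ)) := by
    have : (1 : ℝ) - q ^ f = qnumR q (f : ℝ) * (1 - q) := by
      rw [qnumR, hexpf]
      field_simp
    exact_mod_cast this
  have per_a : ∀ a ∈ Finset.range f, ∑' m : ℕ, G (a + f * m)
      = ((qnumR q (f : ℝ) : ℝ) : ℂ) ^ k *
        (χ (a : ZMod f) * qcpow q ((h - 1) * (a : ℂ)) * qbeta (q ^ f) h (k + 1) ((x + a) / f)) := by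
    intro a ha
    rw [Finset.mem_range] at ha
    have hxa : 0 < (x + a) / f := div_pos (by positivity) (by positivity)
    rw [qbeta_eq hqf0 hqf1 hh k hxa, ← tsum_mul_left, ← tsum_mul_left]
    refine (tsum_congr fun m => ?_).symm
    -- termwise identity
    have hχ : χ (((a + f * m : ℕ) : ZMod f)) = χ ((a : ℕ) : ZMod f) := by
      push_cast
      simp [ZMod.natCast_self]
    have hE1 : qcpow q ((h - 1) * (a : ℂ)) * qcpow (q ^ f) ((h - 1) * (m : ℂ))
        = qcpow q ((h - 1) * ((a + f * m : ℕ) : ℂ)) := by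
      rw [hqfpow, ← qcpow_add]
      congr 1
      push_cast
      ring
    have hE2 : qcpow q ((h - 1) * (a : ℂ)) * qcpow (q ^ f) (h * (m : ℂ) + (((x + a) / f : ℝ) : ℂ))
        = qcpow q (h * ((a + f * m : ℕ) : ℂ) + (x : ℂ)) := by
      rw [hqfpow, ← qcpow_add]
      congr 1
      push_cast
      field_simp
      ring
    have hR1 : qnumR (q ^ f) ((x + a) / f + m) = qnumR q (x + ((a + f * m : ℕ) : ℝ)) / qnumR q f := by
      rw [qnumR, qnumR, qnumR, Real.log_pow, hexpf,
        show ((x + a) / f + m) * ((f : ℝ) * Real.log q) = (x + ((a + f * m : ℕ) : ℝ)) * Real.log q by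
          push_cast; field_simp; ring]
      have h2 : (1:ℝ) - q ^ f ≠ 0 := by linarith
      have h3 : (1:ℝ) - q ≠ 0 := by linarith
      field_simp
    simp only [hGdef]
    rw [hR1, hKrel, hχ, ← hE1, ← hE2]
    push_cast
    simp only [div_pow, inv_pow]
    field_simp
    ring
  calc qbetaChi q h f χ (k + 1) x
      = ∑ a ∈ Finset.range f, ((qnumR q (f : ℝ) : ℝ) : ℂ) ^ k *
          (χ (a : ZMod f) * qcpow q ((h - 1) * (a : ℂ)) * qbeta (q ^ f) h (k + 1) ((x + a) / f)) := by
        rw [qbetaChi, hKnum, show (((k + 1 : ℕ) : ℤ) - 1) = (k : ℤ) by push_cast; ring,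
          zpow_natCast, Finset.mul_sum]
    _ = ∑ a ∈ Finset.range f, ∑' m : ℕ, G (a + f * m) := (Finset.sum_congr rfl per_a).symm
    _ = ∑' m, G m := resid.symm
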